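/- For every monomial m = x_{i₁}⋯x_{i_k} with i₁,…,i_k ∈ [−n,n]*, one has m = X_{i₁}∘⋯∘X_{i_k}(1) + ∂₁(Ψ_{i₁,…,i_k}), where Ψ_{i₁,…,i_k} = Σ_{l=1}^{k} x_{i₁}⋯x_{i_{l−1}} Y_{i_l}[X_{i_{l+1}}∘⋯∘X_{i_k}(1)]. -/

import Mathlib

open scoped BigOperators

noncomputable section

namespace ToricBorderBasis

abbrev Exp (n : ℕ) := Fin n → ℤ

abbrev LaurentS (n : ℕ) (k : Type*) [Field k] : Type _ := AddMonoidAlgebra k (Exp n)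

variable {k : Type*} [Field k] {n : ℕ}

def edeg {n : ℕ} (α : Exp n) : ℕ := ∑ i, (α i).natAbs

def mono (k : Type*) [Field k] {n : ℕ} (α : Exp n) : LaurentS n k :=
  AddMonoidAlgebra.single α 1

def pdeg (p : LaurentS n k) : ℕ := (p.coeff : Exp n →₀ k).support.sup edeg

def expOf (n : ℕ) (i : Fin n) (s : Bool) : Exp n :=
  Pi.single i (if s then 1 else -1)

def varX (k : Type*) [Field k] {n : ℕ} (i : Fin n) (s : Bool) : LaurentS n k :=
  mono k (expOf n i s)

def Bx {n : ℕ} (B : Set (Exp n)) : Set (Exp n) :=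
  B ∪ {β | ∃ i s, ∃ α ∈ B, β = expOf n i s + α}

def bord {n : ℕ} (B : Set (Exp n)) : Set (Exp n) := Bx B \ B

def ConnectedToOne {n : ℕ} (B : Set (Exp n)) : Prop :=
  (0 : Exp n) ∈ B ∧ ∀ α ∈ B, α ≠ 0 →
    ∃ i s, ∃ α' ∈ B, α = expOf n i s + α' ∧ edeg α' < edeg α

def spanMon (k : Type*) [Field k] {n : ℕ} (A : Set (Exp n)) :
    Submodule k (LaurentS n k) :=
  Submodule.span k {p | ∃ α ∈ A, p = mono k α}

def Xop (π : LaurentS n k →ₗ[k] LaurentS n k) (i : Fin n) (s : Bool) :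
    LaurentS n k →ₗ[k] LaurentS n k :=
  π ∘ₗ LinearMap.mulLeft k (varX k i s)

/-- `π` is a projection from `⟨B^×⟩` onto `⟨B⟩`. -/
def IsProj (π : LaurentS n k →ₗ[k] LaurentS n k) (B : Set (Exp n)) : Prop :=
  (∀ p ∈ spanMon k (Bx B), π p ∈ spanMon k B) ∧ (∀ p ∈ spanMon k B, π p = p)

/-- The operators `X_i`, `i ∈ [−n,n]*`, pairwise commute on `⟨B⟩`. -/
def CommRelAll (π : LaurentS n k →ₗ[k] LaurentS n k) (B : Set (Exp n)) : Prop :=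
  ∀ (i : Fin n) (s : Bool) (j : Fin n) (t : Bool), ∀ b ∈ spanMon k B,
    Xop π i s (Xop π j t b) = Xop π j t (Xop π i s b)

/-- `X_i ∘ X_{−i} = Id` on `⟨B⟩` for every `i ∈ [−n,n]*`. -/
def InvRelAll (π : LaurentS n k →ₗ[k] LaurentS n k) (B : Set (Exp n)) : Prop :=
  ∀ (i : Fin n) (s : Bool), ∀ b ∈ spanMon k B, Xop π i s (Xop π i (!s) b) = b

/-- The rewriting family `F = {x^β − π(x^β) : x^β ∈ ∂B}`. -/
def rewFamAll (π : LaurentS n k →ₗ[k] LaurentS n k) (B : Set (Exp n)) :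
    Set (LaurentS n k) :=
  {f | ∃ β ∈ bord B, f = mono k β - π (mono k β)}

/-- Indices of the basis `Y_i[m]` of the free module `S₁`:
pairs of a signed index `(i,s)` and `m ∈ B` with `x_i m ∉ B`. -/
def GoodIdx (n : ℕ) (B : Set (Exp n)) : Type :=
  {q : (Fin n × Bool) × Exp n // q.2 ∈ B ∧ expOf n q.1.1 q.1.2 + q.2 ∉ B}

/-- The free `S`-module `S₁` with basis the `Y_i[m]`, `m ∈ B`, `x_i m ∉ B`. -/
abbrev S1 (n : ℕ) (k : Type*) [Field k] (B : Set (Exp n)) : Type _ :=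
  GoodIdx n B →₀ LaurentS n k

open Classical in
/-- The basis element `Y_i[m]`, with the convention `Y_i[m] = 0` if `x_i m ∈ B`. -/
def Ysym (k : Type*) [Field k] {n : ℕ} (B : Set (Exp n)) (i : Fin n) (s : Bool)
    (m : Exp n) : S1 n k B :=
  if h : m ∈ B ∧ expOf n i s + m ∉ B then Finsupp.single ⟨((i, s), m), h⟩ 1 else 0

/-- `k`-linear extension `b ↦ Y_i[b]` for `b ∈ ⟨B⟩`. -/
def YsymL (k : Type*) [Field k] {n : ℕ} (B : Set (Exp n)) (i : Fin n) (s : Bool)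
    (b : LaurentS n k) : S1 n k B :=
  (b.coeff : Exp n →₀ k).sum fun m c => c • Ysym k B i s m

/-- `ψ_i(m) = x_i m − π(x_i m)` for a monomial `m`. -/
def psiMono (π : LaurentS n k →ₗ[k] LaurentS n k) (i : Fin n) (s : Bool)
    (m : Exp n) : LaurentS n k :=
  mono k (expOf n i s + m) - π (mono k (expOf n i s + m))

/-- The `S`-module map `∂₁ : S₁ → S`, `Y_i[m] ↦ ψ_i(m)`. -/
def partial1 (π : LaurentS n k →ₗ[k] LaurentS n k) (B : Set (Exp n)) :
    S1 n k B →ₗ[LaurentS n k] LaurentS n k :=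
  Finsupp.lsum (LaurentS n k) fun q =>
    LinearMap.toSpanSingleton (LaurentS n k) (LaurentS n k)
      (psiMono π q.1.1.1 q.1.1.2 q.1.2)

/-- `φ_{i,j}(m) = x_i Y_j[m] − x_j Y_i[m] − Y_j[X_i(m)] + Y_i[X_j(m)]`. -/
def phiEl (π : LaurentS n k →ₗ[k] LaurentS n k) (B : Set (Exp n))
    (i : Fin n) (s : Bool) (j : Fin n) (t : Bool) (m : Exp n) : S1 n k B :=
  varX k i s • Ysym k B j t m - varX k j t • Ysym k B i s m
    - YsymL k B j t (Xop π i s (mono k m)) + YsymL k B i s (Xop π j t (mono k m))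

/-- `ρ_i(m) = x_i Y_{−i}[m] + Y_i[X_{−i}(m)]`. -/
def rhoEl (π : LaurentS n k →ₗ[k] LaurentS n k) (B : Set (Exp n))
    (i : Fin n) (s : Bool) (m : Exp n) : S1 n k B :=
  varX k i s • Ysym k B i (!s) m + YsymL k B i s (Xop π i (!s) (mono k m))

/-- The `S`-submodule `K₁ ⊆ S₁` generated by the `ρ_i(m)` and `φ_{i,j}(m)`, `m ∈ B`. -/
def K1 (π : LaurentS n k →ₗ[k] LaurentS n k) (B : Set (Exp n)) :
    Submodule (LaurentS n k) (S1 n k B) :=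
  Submodule.span (LaurentS n k)
    ({u | ∃ i s m, m ∈ B ∧ u = rhoEl π B i s m} ∪
     {u | ∃ i s j t m, ((i, s) : Fin n × Bool) ≠ (j, t) ∧ m ∈ B ∧ u = phiEl π B i s j t m})

/-- `X_{i₁} ∘ ⋯ ∘ X_{i_k}` for a sequence of signed indices. -/
def Xcomp (π : LaurentS n k →ₗ[k] LaurentS n k) :
    List (Fin n × Bool) → LaurentS n k →ₗ[k] LaurentS n k
  | [] => LinearMap.id
  | q :: L => (Xop π q.1 q.2) ∘ₗ Xcomp π L

/-- `Ψ_{i₁,…,i_k} = Σ_{l=1}^{k} x_{i₁}⋯x_{i_{l−1}} Y_{i_l}[X_{i_{l+1}} ∘ ⋯ ∘ X_{i_k}(1)]`. -/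
def Psi (π : LaurentS n k →ₗ[k] LaurentS n k) (B : Set (Exp n)) :
    List (Fin n × Bool) → S1 n k B
  | [] => 0
  | q :: L => YsymL k B q.1 q.2 (Xcomp π L 1) + varX k q.1 q.2 • Psi π B L

/-- Degree on `S₁`: max over the nonzero terms `m₁ Y_i[m₂]` of `δ(m₁)`
(`⊥` for the zero element). -/
def s1deg {B : Set (Exp n)} (u : S1 n k B) : WithBot ℕ :=
  u.support.sup fun q => (pdeg (u q) : WithBot ℕ)

end ToricBorderBasis

namespace ToricBorderBasis


section Aux

variable {k : Type*} [Field k] {n : ℕ}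

lemma mono_mem_spanMon {A : Set (Exp n)} {α : Exp n} (hα : α ∈ A) :
    mono k α ∈ spanMon k A :=
  Submodule.subset_span ⟨α, hα, rfl⟩

lemma varX_mul_single (i : Fin n) (s : Bool) (m : Exp n) (c : k) :
    varX k i s * AddMonoidAlgebra.single m c
      = AddMonoidAlgebra.single (expOf n i s + m) c := by
  rw [varX, mono]
  simpa using AddMonoidAlgebra.single_mul_single (R := k)
    (m₁ := expOf n i s) (r₁ := (1:k)) (m₂ := m) (r₂ := c)

lemma mul_mem_spanMon_Bx {B : Set (Exp n)} (i : Fin n) (s : Bool)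
    {b : LaurentS n k} (hb : b ∈ spanMon k B) :
    varX k i s * b ∈ spanMon k (Bx B) := by
  induction hb using Submodule.span_induction with
  | mem p hp =>
      obtain ⟨α, hα, rfl⟩ := hp
      rw [show (mono k α : LaurentS n k) = AddMonoidAlgebra.single α (1:k) from rfl,
        varX_mul_single]
      exact mono_mem_spanMon (Or.inr ⟨i, s, α, hα, rfl⟩)
  | zero => simpa using (spanMon k (Bx B)).zero_mem
  | add x y hx hy ihx ihy => rw [mul_add]; exact add_mem ihx ihy
  | smul c x hx ihx => rw [mul_smul_comm]; exact Submodule.smul_mem _ _ ihx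

lemma Xop_mem_spanMon {B : Set (Exp n)} {π : LaurentS n k →ₗ[k] LaurentS n k}
    (hπ : IsProj π B) (i : Fin n) (s : Bool)
    {b : LaurentS n k} (hb : b ∈ spanMon k B) :
    Xop π i s b ∈ spanMon k B :=
  hπ.1 _ (mul_mem_spanMon_Bx i s hb)

lemma Xcomp_one_mem {B : Set (Exp n)} {π : LaurentS n k →ₗ[k] LaurentS n k}
    (hπ : IsProj π B) (hB1 : ConnectedToOne B) :
    ∀ L : List (Fin n × Bool), Xcomp π L 1 ∈ spanMon k B := by
  intro L
  induction L with
  | nil =>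
      simpa [Xcomp, mono, AddMonoidAlgebra.one_def] using
        mono_mem_spanMon (A := B) (k := k) hB1.1
  | cons q L ih =>
      exact Xop_mem_spanMon hπ q.1 q.2 ih

lemma partial1_single {B : Set (Exp n)} (π : LaurentS n k →ₗ[k] LaurentS n k)
    (q : GoodIdx n B) (c : LaurentS n k) :
    partial1 π B (Finsupp.single q c) = c • psiMono π q.1.1.1 q.1.1.2 q.1.2 := by
  simp [partial1]

lemma partial1_Ysym {B : Set (Exp n)} {π : LaurentS n k →ₗ[k] LaurentS n k}
    (hπ : IsProj π B) (i : Fin n) (s : Bool) {m : Exp n} (hm : m ∈ B) :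
    partial1 π B (Ysym k B i s m) = psiMono π i s m := by
  rw [Ysym]
  split
  · exact (partial1_single π (⟨((i, s), m), ‹_›⟩ : GoodIdx n B) 1).trans (by simp)
  · next h =>
      push_neg at h
      have hmem : expOf n i s + m ∈ B := h hm
      have : π (mono k (expOf n i s + m)) = mono k (expOf n i s + m) :=
        hπ.2 _ (mono_mem_spanMon hmem)
      simp [psiMono, this]

lemma YsymL_single {B : Set (Exp n)} (i : Fin n) (s : Bool) (m : Exp n) (c : k) :
    YsymL k B i s (AddMonoidAlgebra.single m c) = c • Ysym k B i s m := by
  rw [YsymL, AddMonoidAlgebra.coeff_single]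
  exact Finsupp.sum_single_index (by simp)

lemma partial1_YsymL {B : Set (Exp n)} {π : LaurentS n k →ₗ[k] LaurentS n k}
    (hπ : IsProj π B) (i : Fin n) (s : Bool)
    {b : LaurentS n k} (hb : b ∈ spanMon k B) :
    partial1 π B (YsymL k B i s b) = varX k i s * b - π (varX k i s * b) := by
  induction hb using Submodule.span_induction with
  | mem p hp =>
      obtain ⟨α, hα, rfl⟩ := hp
      rw [show (mono k α : LaurentS n k) = AddMonoidAlgebra.single α (1:k) from rfl,
        YsymL_single, one_smul, partial1_Ysym hπ i s hα, varX_mul_single]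
      simp [psiMono, mono]
  | zero => simp [YsymL]
  | add x y hx hy ihx ihy =>
      have : YsymL k B i s (x + y) = YsymL k B i s x + YsymL k B i s y := by
        rw [YsymL, YsymL, YsymL, AddMonoidAlgebra.coeff_add]
        exact Finsupp.sum_add_index' (by simp) (by intros; rw [add_smul])
      rw [this, map_add, ihx, ihy, mul_add, map_add]
      ring
  | smul c x hx ihx =>
      have : YsymL k B i s (c • x) = c • YsymL k B i s x := by
        rw [YsymL, YsymL, AddMonoidAlgebra.coeff_smul, Finsupp.sum_smul_index' (by simp), Finsupp.smul_sum]
        exact Finsupp.sum_congr fun m _ => mul_smul c (x.coeff m) _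
      rw [this, LinearMap.map_smul_of_tower, ihx, smul_sub, mul_smul_comm,
        map_smul]

end Aux

/-- For every monomial `m = x_{i₁}⋯x_{i_k}` one has
`m = X_{i₁} ∘ ⋯ ∘ X_{i_k}(1) + ∂₁(Ψ_{i₁,…,i_k})`. -/
theorem statement_10 {n : ℕ} {k : Type*} [Field k]
    (B : Set (Exp n)) (hBfin : B.Finite) (hB1 : ConnectedToOne B)
    (π : LaurentS n k →ₗ[k] LaurentS n k) (hπ : IsProj π B)
    (hcomm : CommRelAll π B) (hinv : InvRelAll π B) :
    ∀ L : List (Fin n × Bool),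
      (L.map fun q => varX k q.1 q.2).prod
        = Xcomp π L 1 + partial1 π B (Psi π B L) := by
  intro L
  induction L with
  | nil => simp [Xcomp, Psi]
  | cons q L ih =>
      have hmem := Xcomp_one_mem hπ hB1 L
      simp only [List.map_cons, List.prod_cons, ih, Psi, map_add,
        LinearMap.map_smul, Xcomp, LinearMap.comp_apply]
      rw [partial1_YsymL hπ q.1 q.2 hmem]
      have hX : Xop π q.1 q.2 (Xcomp π L 1) = π (varX k q.1 q.2 * Xcomp π L 1) := by
        simp [Xop]
      rw [hX, smul_eq_mul]
      ring

end ToricBorderBasis
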